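/- Let a₁, …, aₙ be positive integers. Then the number of perfect matchings of the snake graph 𝒢[a₁, …, aₙ] equals the continuant K(a₁, …, aₙ), i.e. m(𝒢[a₁, …, aₙ]) is the numerator of the continued fraction [a₁, …, aₙ] in lowest terms. -/

import Mathlib

/-- Auxiliary function for the continuant: `contAux` applied to the reversed list realizes
the recursion `K(a₁,…,aₙ) = aₙ·K(a₁,…,aₙ₋₁) + K(a₁,…,aₙ₋₂)`, `K() = 1`, `K(a₁) = a₁`. -/
def contAux : List ℕ → ℕ
  | [] => 1
  | [a] => a
  | a :: b :: t => a * contAux (b :: t) + contAux t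

/-- The continuant `K(a₁,…,aₙ)` of a list of natural numbers. -/
def continuant (l : List ℕ) : ℕ := contAux l.reverse

/-- `isTurnPoint a k` holds iff `k = ℓᵢ = a₁ + ⋯ + aᵢ` for some `1 ≤ i ≤ n − 1`,
where `n = a.length`. -/
def isTurnPoint (a : List ℕ) (k : ℕ) : Bool :=
  (List.range a.length).any fun i => decide (1 ≤ i ∧ (a.take i).sum = k)

/-- Exchange of the two coordinate directions `(1,0) ↔ (0,1)`. -/
def flipDir (p : ℤ × ℤ) : ℤ × ℤ := (p.2, p.1)

/-- The step directions `δ₁, …, δ_{d−1}`: `δ₁ = (1,0)`, and for `k ≥ 2`,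
`δ_k = δ_{k−1}` if `k = ℓᵢ` for some `1 ≤ i ≤ n−1`, and `δ_k ≠ δ_{k−1}` otherwise. -/
def delta (a : List ℕ) : ℕ → ℤ × ℤ
  | 0 => ((1 : ℤ), (0 : ℤ))
  | 1 => ((1 : ℤ), (0 : ℤ))
  | k + 2 => if isTurnPoint a (k + 2) then delta a (k + 1) else flipDir (delta a (k + 1))

/-- The bottom-left corners `p₁, …, p_d` of the tiles: `p₁ = (0,0)`, `p_{k+1} = p_k + δ_k`. -/
def snakePos (a : List ℕ) : ℕ → ℤ × ℤ
  | 0 => ((0 : ℤ), (0 : ℤ))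
  | 1 => ((0 : ℤ), (0 : ℤ))
  | k + 2 => snakePos a (k + 1) + delta a (k + 1)

/-- The four corners of a unit tile, relative to its bottom-left corner. -/
def corners : Set (ℤ × ℤ) :=
  {((0 : ℤ), (0 : ℤ)), ((1 : ℤ), (0 : ℤ)), ((0 : ℤ), (1 : ℤ)), ((1 : ℤ), (1 : ℤ))}

/-- The vertex set of the snake graph `𝒢[a₁,…,aₙ]`: the corners of the `d = a₁+⋯+aₙ−1`
tiles with bottom-left corners `p₁,…,p_d`; by convention, if `a₁+⋯+aₙ = 1`, the graph is
a single edge. -/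
def snakeVerts (a : List ℕ) : Set (ℤ × ℤ) :=
  if a.sum = 1 then {((0 : ℤ), (0 : ℤ)), ((1 : ℤ), (0 : ℤ))}
  else {v | ∃ k ∈ Finset.Icc 1 (a.sum - 1), ∃ ε ∈ corners, v = snakePos a k + ε}

/-- The four sides of the unit tile with bottom-left corner `q`, as unordered pairs. -/
def tileSides (q : ℤ × ℤ) : Set (Sym2 (ℤ × ℤ)) :=
  { s(q, q + ((1 : ℤ), (0 : ℤ))), s(q, q + ((0 : ℤ), (1 : ℤ))),
    s(q + ((1 : ℤ), (0 : ℤ)), q + ((1 : ℤ), (1 : ℤ))),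
    s(q + ((0 : ℤ), (1 : ℤ)), q + ((1 : ℤ), (1 : ℤ))) }

/-- The edge set of the snake graph `𝒢[a₁,…,aₙ]`: two vertices are adjacent exactly when
the segment joining them is a side of one of the tiles. -/
def snakeEdges (a : List ℕ) : Set (Sym2 (ℤ × ℤ)) :=
  if a.sum = 1 then {s(((0 : ℤ), (0 : ℤ)), ((1 : ℤ), (0 : ℤ)))}
  else {e | ∃ k ∈ Finset.Icc 1 (a.sum - 1), e ∈ tileSides (snakePos a k)}

/-- A perfect matching of the snake graph `𝒢[a₁,…,aₙ]`: a set of its edges covering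
every vertex exactly once. -/
def IsSnakePerfectMatching (a : List ℕ) (P : Set (Sym2 (ℤ × ℤ))) : Prop :=
  P ⊆ snakeEdges a ∧ ∀ v ∈ snakeVerts a, ∃! e, e ∈ P ∧ v ∈ e

/-- `m(𝒢[a₁,…,aₙ])`: the number of perfect matchings of the snake graph. -/
noncomputable def matchNum (a : List ℕ) : ℕ :=
  Nat.card {P : Set (Sym2 (ℤ × ℤ)) // IsSnakePerfectMatching a P}

/-- abstract matching-count recursion -/
def fAC (t : ℕ → Bool) : ℕ → ℕ × ℕ
  | 0 => (1, 1)
  | m + 1 => ((fAC t m).1 + (fAC t m).2, if t (m + 1) then (fAC t m).1 else (fAC t m).2)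

lemma fAC_congr (t t' : ℕ → Bool) (m : ℕ) (h : ∀ k, 1 ≤ k → k ≤ m → t k = t' k) :
    fAC t m = fAC t' m := by
  induction m with
  | zero => rfl
  | succ n ih =>
      have hn : fAC t n = fAC t' n := ih fun k h1 h2 => h k h1 (h2.trans (Nat.le_succ n))
      simp [fAC, hn, h (n+1) (Nat.succ_le_succ (Nat.zero_le n)) le_rfl]

lemma fAC_no_turn (t : ℕ → Bool) (m0 j : ℕ) (h : ∀ k, m0 < k → k ≤ m0 + j → t k = false) :
    fAC t (m0 + j) = ((fAC t m0).1 + j * (fAC t m0).2, (fAC t m0).2) := by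
  induction j with
  | zero => simp
  | succ n ih =>
      have hn := ih fun k h1 h2 => h k h1 (h2.trans (by omega))
      have ht : t (m0 + n + 1) = false := h _ (by omega) (by omega)
      show fAC t (m0 + n + 1) = _
      rw [fAC, hn, ht]
      simp only [Prod.mk.injEq]
      refine ⟨by ring, rfl⟩

lemma isTurnPoint_iff (a : List ℕ) (k : ℕ) :
    isTurnPoint a k = true ↔ ∃ i, 1 ≤ i ∧ i < a.length ∧ (a.take i).sum = k := by
  simp [isTurnPoint, List.any_eq_true]
  constructor
  · rintro ⟨i, h1, h2, h3⟩; exact ⟨i, h2, h1, h3⟩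
  · rintro ⟨i, h1, h2, h3⟩; exact ⟨i, h2, h1, h3⟩

lemma take_sum_lt (l : List ℕ) (hpos : ∀ x ∈ l, 0 < x) {i : ℕ} (hi : i < l.length) :
    (l.take i).sum < l.sum := by
  induction l generalizing i with
  | nil => simp at hi
  | cons h t ih =>
      cases i with
      | zero =>
          simp only [List.take_zero, List.sum_nil, List.sum_cons]
          have : 0 < h := hpos h (by simp)
          have : 0 ≤ t.sum := Nat.zero_le _
          omega
      | succ n =>
          simp only [List.take_succ_cons, List.sum_cons]
          have := ih (fun x hx => hpos x (by simp [hx])) (by simpa using hi)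
          omega

lemma isTurnPoint_concat_lt (l : List ℕ) (x : ℕ) (k : ℕ) (hk : k < l.sum) :
    isTurnPoint (l ++ [x]) k = isTurnPoint l k := by
  rcases Bool.eq_false_or_eq_true (isTurnPoint l k) with h | h
  · rw [h]
    rw [isTurnPoint_iff] at h
    obtain ⟨i, h1, h2, h3⟩ := h
    rw [isTurnPoint_iff]
    refine ⟨i, h1, by simp; omega, ?_⟩
    rw [List.take_append_of_le_length h2.le, h3]
  · rw [h]
    rw [Bool.eq_false_iff]
    intro hc
    rw [isTurnPoint_iff] at hc
    obtain ⟨i, h1, h2, h3⟩ := hc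
    simp only [List.length_append, List.length_singleton] at h2
    have hil : i ≤ l.length := by omega
    rw [List.take_append_of_le_length hil] at h3
    rcases Nat.lt_or_ge i l.length with hlt | hge
    · rw [Bool.eq_false_iff] at h
      exact h (by rw [isTurnPoint_iff]; exact ⟨i, h1, hlt, h3⟩)
    · have : i = l.length := le_antisymm hil hge
      rw [this, List.take_length] at h3
      omega

lemma isTurnPoint_concat_sum (l : List ℕ) (x : ℕ) (hl : l ≠ []) :
    isTurnPoint (l ++ [x]) l.sum = true := by
  rw [isTurnPoint_iff]
  refine ⟨l.length, ?_, by simp, ?_⟩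
  · have := List.length_pos_iff.mpr hl; omega
  · rw [List.take_append_of_le_length le_rfl, List.take_length]

lemma isTurnPoint_concat_gt (l : List ℕ) (x k : ℕ) (hk : l.sum < k) :
    isTurnPoint (l ++ [x]) k = false := by
  rw [Bool.eq_false_iff]
  intro hc
  rw [isTurnPoint_iff] at hc
  obtain ⟨i, h1, h2, h3⟩ := hc
  simp only [List.length_append, List.length_singleton] at h2
  have hil : i ≤ l.length := by omega
  rw [List.take_append_of_le_length hil] at h3
  have : (l.take i).sum ≤ l.sum := by
    conv_rhs => rw [← List.take_append_drop i l]
    rw [List.sum_append]; omega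
  omega

lemma isTurnPoint_singleton (x k : ℕ) : isTurnPoint [x] k = false := by
  rw [Bool.eq_false_iff]
  intro hc
  rw [isTurnPoint_iff] at hc
  obtain ⟨i, h1, h2, _⟩ := hc
  simp at h2; omega

lemma continuant_concat (l : List ℕ) (x : ℕ) (hl : l ≠ []) :
    continuant (l ++ [x]) = x * continuant l + continuant l.dropLast := by
  unfold continuant
  rw [List.reverse_append]
  simp only [List.reverse_singleton, List.singleton_append]
  obtain ⟨b, t, ht⟩ : ∃ b t, l.reverse = b :: t := by
    cases h : l.reverse with
    | nil => exact absurd (by simpa using congrArg List.reverse h) hl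
    | cons b t => exact ⟨b, t, rfl⟩
  have ht2 : l.dropLast.reverse = t := by
    rw [← List.tail_reverse, ht]
    rfl
  rw [ht, contAux, ht2]

lemma fAC_main (a : List ℕ) (ha : a ≠ []) (hpos : ∀ x ∈ a, 0 < x) :
    fAC (isTurnPoint a) (a.sum - 1) = (continuant a, continuant a.dropLast) := by
  induction a using List.reverseRecOn with
  | nil => exact absurd rfl ha
  | append_singleton l x ih =>
      have hx : 0 < x := hpos x (by simp)
      rcases eq_or_ne l [] with rfl | hl
      · simp only [List.nil_append]
        have : ∀ k, 0 < k → k ≤ x - 1 → isTurnPoint [x] k = false :=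
          fun k _ _ => isTurnPoint_singleton x k
        have h0 : ([x] : List ℕ).sum - 1 = 0 + (x - 1) := by simp
        rw [h0, fAC_no_turn _ 0 (x-1) (fun k h1 h2 => isTurnPoint_singleton x k)]
        simp [fAC, continuant, contAux]
        omega
      · have hlpos : ∀ y ∈ l, 0 < y := fun y hy => hpos y (by simp [hy])
        have hls : 0 < l.sum := by
          obtain ⟨b, t, rfl⟩ := List.exists_cons_of_ne_nil hl
          have := hlpos b (by simp); simp [List.sum_cons]; omega
        have ih' := ih hl hlpos
        -- step 1: agreement up to l.sum - 1
        have hagree : fAC (isTurnPoint (l ++ [x])) (l.sum - 1) = fAC (isTurnPoint l) (l.sum - 1) :=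
          fAC_congr _ _ _ (fun k _ h2 => isTurnPoint_concat_lt l x k (by omega))
        -- step 2: value at l.sum
        have hsum : l.sum = (l.sum - 1) + 1 := by omega
        have hstep : fAC (isTurnPoint (l ++ [x])) l.sum =
            (continuant l + continuant l.dropLast, continuant l) := by
          rw [hsum]
          rw [show fAC (isTurnPoint (l ++ [x])) (l.sum - 1 + 1) =
            ((fAC (isTurnPoint (l ++ [x])) (l.sum-1)).1 + (fAC (isTurnPoint (l ++ [x])) (l.sum-1)).2,
             if isTurnPoint (l ++ [x]) (l.sum - 1 + 1) then (fAC (isTurnPoint (l ++ [x])) (l.sum-1)).1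
             else (fAC (isTurnPoint (l ++ [x])) (l.sum-1)).2) from rfl]
          rw [hagree, ih', ← hsum, isTurnPoint_concat_sum l x hl]
          simp
        -- step 3: no turn from l.sum + 1 to l.sum + (x-1)
        have hfin : fAC (isTurnPoint (l ++ [x])) (l.sum + (x - 1)) =
            ((continuant l + continuant l.dropLast) + (x-1) * continuant l, continuant l) := by
          rw [fAC_no_turn _ l.sum (x-1) (fun k h1 h2 => isTurnPoint_concat_gt l x k h1), hstep]
        have hss : (l ++ [x]).sum - 1 = l.sum + (x - 1) := by simp; omega
        rw [hss, hfin, continuant_concat l x hl, List.dropLast_concat]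
        obtain ⟨x', rfl⟩ : ∃ x', x = x' + 1 := ⟨x - 1, by omega⟩
        simp only [Nat.add_sub_cancel, Prod.mk.injEq]
        constructor
        · ring
        · trivial

-- ### geometry primitives

lemma delta_cases (a : List ℕ) : ∀ k, delta a k = ((1:ℤ),(0:ℤ)) ∨ delta a k = ((0:ℤ),(1:ℤ))
  | 0 => Or.inl rfl
  | 1 => Or.inl rfl
  | k + 2 => by
      rw [delta]
      rcases delta_cases a (k+1) with h | h <;> rw [h] <;> split <;> simp [flipDir]

lemma snakePos_succ (a : List ℕ) (m : ℕ) (hm : 1 ≤ m) :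
    snakePos a (m + 1) = snakePos a m + delta a m := by
  obtain ⟨n, rfl⟩ : ∃ n, m = n + 1 := ⟨m - 1, by omega⟩
  rfl

lemma snakePos_coordSum (a : List ℕ) : ∀ k, 1 ≤ k → (snakePos a k).1 + (snakePos a k).2 = (k : ℤ) - 1
  | 0, h => by omega
  | 1, _ => by simp [snakePos]
  | k + 2, _ => by
      rw [snakePos, Prod.fst_add, Prod.snd_add]
      have h1 := snakePos_coordSum a (k+1) (by omega)
      rcases delta_cases a (k+1) with h | h <;> rw [h] <;> push_cast <;> simp <;> omega

def pVerts (a : List ℕ) (m : ℕ) : Set (ℤ × ℤ) :=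
  {v | ∃ k ∈ Finset.Icc 1 m, ∃ ε ∈ corners, v = snakePos a k + ε}

def pEdges (a : List ℕ) (m : ℕ) : Set (Sym2 (ℤ × ℤ)) :=
  {e | ∃ k ∈ Finset.Icc 1 m, e ∈ tileSides (snakePos a k)}

lemma mem_pVerts_bound (a : List ℕ) (m : ℕ) (w : ℤ × ℤ) (h : w ∈ pVerts a m) :
    w.1 + w.2 ≤ (m : ℤ) ∨ w = snakePos a m + ((1:ℤ),(1:ℤ)) := by
  obtain ⟨k, hk, ε, hε, rfl⟩ := h
  simp only [Finset.mem_Icc] at hk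
  have hsum := snakePos_coordSum a k hk.1
  have hkm : (k : ℤ) ≤ (m : ℤ) := by exact_mod_cast hk.2
  simp only [corners, Set.mem_insert_iff, Set.mem_singleton_iff] at hε
  rcases hε with rfl | rfl | rfl | rfl
  · left; simp only [Prod.fst_add, Prod.snd_add]; omega
  · left; simp only [Prod.fst_add, Prod.snd_add]; omega
  · left; simp only [Prod.fst_add, Prod.snd_add]; omega
  · -- ε = (1,1): sum = k + 1 ≤ m + 1; if < then left else k = m
    rcases Nat.lt_or_ge k m with hlt | hge
    · left; simp only [Prod.fst_add, Prod.snd_add]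
      have : (k : ℤ) < (m : ℤ) := by exact_mod_cast hlt
      omega
    · right; have : k = m := by omega
      rw [this]

lemma tileSides_endpoints (q : ℤ × ℤ) (e : Sym2 (ℤ × ℤ)) (he : e ∈ tileSides q)
    (w : ℤ × ℤ) (hw : w ∈ e) : ∃ ε ∈ corners, w = q + ε := by
  simp only [tileSides, Set.mem_insert_iff, Set.mem_singleton_iff] at he
  have h00 : w = q → ∃ ε ∈ corners, w = q + ε := by
    rintro rfl
    exact ⟨((0:ℤ),(0:ℤ)), by simp [corners], by cases w; simp [Prod.ext_iff]⟩
  rcases he with rfl | rfl | rfl | rfl <;>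
    rw [Sym2.mem_iff] at hw <;>
    rcases hw with h | h <;>
    first
      | exact h00 h
      | exact ⟨((1:ℤ),(0:ℤ)), by simp [corners], h⟩
      | exact ⟨((0:ℤ),(1:ℤ)), by simp [corners], h⟩
      | exact ⟨((1:ℤ),(1:ℤ)), by simp [corners], h⟩

lemma pEdges_endpoints (a : List ℕ) (m : ℕ) (e : Sym2 (ℤ × ℤ)) (he : e ∈ pEdges a m)
    (w : ℤ × ℤ) (hw : w ∈ e) : w ∈ pVerts a m := by
  obtain ⟨k, hk, hts⟩ := he
  obtain ⟨ε, hε, rfl⟩ := tileSides_endpoints _ e hts w hw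
  exact ⟨k, hk, ε, hε, rfl⟩

section Inst
variable (a : List ℕ) (m : ℕ)

lemma delta_mem_corners : delta a m ∈ corners := by
  rcases delta_cases a m with h | h <;> rw [h] <;> simp [corners]

lemma X_mem (hm : 1 ≤ m) : snakePos a (m+1) ∈ pVerts a m := by
  rw [snakePos_succ a m hm]
  exact ⟨m, by simp [Finset.mem_Icc]; omega, delta a m, delta_mem_corners a m, rfl⟩

lemma Y_mem (hm : 1 ≤ m) : snakePos a m + ((1:ℤ),(1:ℤ)) ∈ pVerts a m :=
  ⟨m, by simp [Finset.mem_Icc]; omega, ((1:ℤ),(1:ℤ)), by simp [corners], rfl⟩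

lemma X_sum : (snakePos a (m+1)).1 + (snakePos a (m+1)).2 = (m : ℤ) := by
  have := snakePos_coordSum a (m+1) (by omega); push_cast at this ⊢; omega

lemma delta_sum (k : ℕ) : (delta a k).1 + (delta a k).2 = 1 := by
  rcases delta_cases a k with h | h <;> rw [h] <;> norm_num

lemma U_sum : ((snakePos a (m+1) + delta a m).1 + (snakePos a (m+1) + delta a m).2) = (m : ℤ) + 1 := by
  have h1 := X_sum a m
  have h2 := delta_sum a m
  simp only [Prod.fst_add, Prod.snd_add]; omega

lemma U_ne_Y (hm : 1 ≤ m) : snakePos a (m+1) + delta a m ≠ snakePos a m + ((1:ℤ),(1:ℤ)) := by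
  rw [snakePos_succ a m hm]
  rcases delta_cases a m with h | h <;> rw [h] <;>
    simp [Prod.ext_iff, add_assoc] <;> intro h1 <;> omega

lemma U_not_mem (hm : 1 ≤ m) : snakePos a (m+1) + delta a m ∉ pVerts a m := by
  intro hc
  rcases mem_pVerts_bound a m _ hc with h | h
  · have := U_sum a m; omega
  · exact U_ne_Y a m hm h

lemma V_sum : ((snakePos a (m+1) + ((1:ℤ),(1:ℤ))).1 + (snakePos a (m+1) + ((1:ℤ),(1:ℤ))).2) = (m : ℤ) + 2 := by
  have h1 := X_sum a m
  simp only [Prod.fst_add, Prod.snd_add]; omega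

lemma Y_sum (hm : 1 ≤ m) : ((snakePos a m + ((1:ℤ),(1:ℤ))).1 + (snakePos a m + ((1:ℤ),(1:ℤ))).2) = (m : ℤ) + 1 := by
  have := snakePos_coordSum a m hm
  simp only [Prod.fst_add, Prod.snd_add]; omega

lemma V_not_mem (hm : 1 ≤ m) : snakePos a (m+1) + ((1:ℤ),(1:ℤ)) ∉ pVerts a m := by
  intro hc
  rcases mem_pVerts_bound a m _ hc with h | h
  · have := V_sum a m; omega
  · have h1 := V_sum a m
    have h2 := Y_sum a m hm
    rw [h] at h1; omega

lemma ne_of_sum {p q : ℤ × ℤ} (h : p.1 + p.2 ≠ q.1 + q.2) : p ≠ q := by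
  intro hc; rw [hc] at h; exact h rfl

lemma X_ne_Y (hm : 1 ≤ m) : snakePos a (m+1) ≠ snakePos a m + ((1:ℤ),(1:ℤ)) :=
  ne_of_sum (by rw [X_sum a m, Y_sum a m hm]; omega)

lemma U_ne_V : snakePos a (m+1) + delta a m ≠ snakePos a (m+1) + ((1:ℤ),(1:ℤ)) :=
  ne_of_sum (by rw [U_sum a m, V_sum a m]; omega)

lemma U_ne_X : snakePos a (m+1) + delta a m ≠ snakePos a (m+1) :=
  ne_of_sum (by rw [U_sum a m, X_sum a m]; omega)

lemma V_ne_X : snakePos a (m+1) + ((1:ℤ),(1:ℤ)) ≠ snakePos a (m+1) :=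
  ne_of_sum (by rw [V_sum a m, X_sum a m]; omega)

lemma V_ne_Y (hm : 1 ≤ m) : snakePos a (m+1) + ((1:ℤ),(1:ℤ)) ≠ snakePos a m + ((1:ℤ),(1:ℤ)) :=
  ne_of_sum (by rw [V_sum a m, Y_sum a m hm]; omega)

lemma XY_edge (hm : 1 ≤ m) :
    s(snakePos a (m+1), snakePos a m + ((1:ℤ),(1:ℤ))) ∈ pEdges a m := by
  refine ⟨m, by simp [Finset.mem_Icc]; omega, ?_⟩
  rw [snakePos_succ a m hm]
  rcases delta_cases a m with h | h <;> rw [h] <;> simp [tileSides]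

lemma Icc_succ_mem (k : ℕ) : k ∈ Finset.Icc 1 (m+1) ↔ k ∈ Finset.Icc 1 m ∨ k = m + 1 := by
  simp [Finset.mem_Icc]; omega

lemma hy_eq (hm : 1 ≤ m) (c : ℤ × ℤ) (hc : delta a m + c = ((1:ℤ),(1:ℤ))) :
    snakePos a (m+1) + c = snakePos a m + ((1:ℤ),(1:ℤ)) := by
  rw [snakePos_succ a m hm, add_assoc, hc]

lemma pVerts_split (hm : 1 ≤ m) :
    pVerts a (m+1) = pVerts a m ∪
      {snakePos a (m+1) + delta a m, snakePos a (m+1) + ((1:ℤ),(1:ℤ))} := by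
  ext w
  constructor
  · rintro ⟨k, hk, ε, hε, rfl⟩
    rcases (Icc_succ_mem m k).1 hk with hk' | rfl
    · exact Or.inl ⟨k, hk', ε, hε, rfl⟩
    · simp only [corners, Set.mem_insert_iff, Set.mem_singleton_iff] at hε
      rcases hε with rfl | rfl | rfl | rfl
      · left
        have h0 : snakePos a (m+1) + ((0:ℤ),(0:ℤ)) = snakePos a (m+1) := by
          ext <;> simp
        rw [h0]; exact X_mem a m hm
      · rcases delta_cases a m with h | h
        · right; left; rw [h]
        · left
          rw [hy_eq a m hm _ (by rw [h]; norm_num)]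
          exact Y_mem a m hm
      · rcases delta_cases a m with h | h
        · left
          rw [hy_eq a m hm _ (by rw [h]; norm_num)]
          exact Y_mem a m hm
        · right; left; rw [h]
      · right; right; rfl
  · rintro (⟨k, hk, ε, hε, rfl⟩ | h)
    · exact ⟨k, (Icc_succ_mem m k).2 (Or.inl hk), ε, hε, rfl⟩
    · rcases h with rfl | rfl
      · exact ⟨m+1, (Icc_succ_mem m _).2 (Or.inr rfl), delta a m, delta_mem_corners a m, rfl⟩
      · exact ⟨m+1, (Icc_succ_mem m _).2 (Or.inr rfl), ((1:ℤ),(1:ℤ)), by simp [corners], rfl⟩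

lemma pEdges_split (hm : 1 ≤ m) :
    pEdges a (m+1) = pEdges a m ∪
      {s(snakePos a (m+1), snakePos a (m+1) + delta a m),
       s(snakePos a (m+1) + delta a m, snakePos a (m+1) + ((1:ℤ),(1:ℤ))),
       s(snakePos a m + ((1:ℤ),(1:ℤ)), snakePos a (m+1) + ((1:ℤ),(1:ℤ)))} := by
  ext e
  constructor
  · rintro ⟨k, hk, hts⟩
    rcases (Icc_succ_mem m k).1 hk with hk' | rfl
    · exact Or.inl ⟨k, hk', hts⟩
    · simp only [tileSides, Set.mem_insert_iff, Set.mem_singleton_iff] at hts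
      rcases delta_cases a m with h | h
      · have hy := hy_eq a m hm ((0:ℤ),(1:ℤ)) (by rw [h]; norm_num)
        rcases hts with rfl | rfl | rfl | rfl
        · right; left; rw [h]
        · left; rw [hy]; exact XY_edge a m hm
        · right; right; left; rw [h]
        · right; right; right; rw [hy]; rfl
      · have hy := hy_eq a m hm ((1:ℤ),(0:ℤ)) (by rw [h]; norm_num)
        rcases hts with rfl | rfl | rfl | rfl
        · left; rw [hy]; exact XY_edge a m hm
        · right; left; rw [h]
        · right; right; right; rw [hy]; rfl
        · right; right; left; rw [h]
  · rintro (⟨k, hk, hts⟩ | h)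
    · exact ⟨k, (Icc_succ_mem m k).2 (Or.inl hk), hts⟩
    · refine ⟨m+1, (Icc_succ_mem m _).2 (Or.inr rfl), ?_⟩
      simp only [Set.mem_insert_iff, Set.mem_singleton_iff] at h
      rcases delta_cases a m with hd | hd
      · have hy := hy_eq a m hm ((0:ℤ),(1:ℤ)) (by rw [hd]; norm_num)
        rcases h with rfl | rfl | rfl <;>
          simp only [tileSides, Set.mem_insert_iff, Set.mem_singleton_iff, hd, ← hy] <;> tauto
      · have hy := hy_eq a m hm ((1:ℤ),(0:ℤ)) (by rw [hd]; norm_num)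
        rcases h with rfl | rfl | rfl <;>
          simp only [tileSides, Set.mem_insert_iff, Set.mem_singleton_iff, hd, ← hy] <;> tauto

lemma delta_succ_straight (hm : 1 ≤ m) (h : isTurnPoint a (m+1) = true) :
    delta a (m+1) = delta a m := by
  obtain ⟨n, rfl⟩ : ∃ n, m = n + 1 := ⟨m - 1, by omega⟩
  rw [delta, if_pos h]

lemma delta_succ_turn (hm : 1 ≤ m) (h : isTurnPoint a (m+1) = false) :
    delta a (m+1) = flipDir (delta a m) := by
  obtain ⟨n, rfl⟩ : ∃ n, m = n + 1 := ⟨m - 1, by omega⟩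
  rw [delta, if_neg (by simp [h])]

lemma snakePos_straight (hm : 1 ≤ m) (h : isTurnPoint a (m+1) = true) :
    snakePos a (m+2) = snakePos a (m+1) + delta a m := by
  rw [snakePos_succ a (m+1) (by omega), delta_succ_straight a m hm h]

lemma snakePos_turn (hm : 1 ≤ m) (h : isTurnPoint a (m+1) = false) :
    snakePos a (m+2) = snakePos a m + ((1:ℤ),(1:ℤ)) := by
  rw [snakePos_succ a (m+1) (by omega), delta_succ_turn a m hm h, snakePos_succ a m hm, add_assoc]
  congr 1
  rcases delta_cases a m with hd | hd <;> rw [hd] <;> simp [flipDir]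

end Inst

-- ### abstract matching lemmas
section Abstract

variable {α : Type*}

def MAp (V : Set α) (E : Set (Sym2 α)) (P : Set (Sym2 α)) : Prop :=
  P ⊆ E ∧ ∀ w ∈ V, ∃! e, e ∈ P ∧ w ∈ e

def MCp (V : Set α) (E : Set (Sym2 α)) (x y : α) (P : Set (Sym2 α)) : Prop :=
  P ⊆ E ∧ (∀ w ∈ V \ {x, y}, ∃! e, e ∈ P ∧ w ∈ e) ∧ ∀ e ∈ P, x ∉ e ∧ y ∉ e

variable {V : Set α} {E : Set (Sym2 α)} {x y u v : α}

lemma n1_notin_E (hE : ∀ e ∈ E, ∀ w ∈ e, w ∈ V) (hu : u ∉ V) : s(x, u) ∉ E :=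
  fun h => hu (hE _ h u (by simp))
lemma n2_notin_E (hE : ∀ e ∈ E, ∀ w ∈ e, w ∈ V) (hu : u ∉ V) : s(u, v) ∉ E :=
  fun h => hu (hE _ h u (by simp))
lemma n3_notin_E (hE : ∀ e ∈ E, ∀ w ∈ e, w ∈ V) (hv : v ∉ V) : s(y, v) ∉ E :=
  fun h => hv (hE _ h v (by simp))

lemma edge_at_u (hE : ∀ e ∈ E, ∀ w ∈ e, w ∈ V) (hu : u ∉ V) (huy : u ≠ y) (huv : u ≠ v)
    {P e} (hP : P ⊆ E ∪ {s(x,u), s(u,v), s(y,v)}) (he : e ∈ P) (hue : u ∈ e) :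
    e = s(x, u) ∨ e = s(u, v) := by
  rcases hP he with h | h
  · exact absurd (hE _ h u hue) hu
  · simp only [Set.mem_insert_iff, Set.mem_singleton_iff] at h
    rcases h with rfl | rfl | rfl
    · exact Or.inl rfl
    · exact Or.inr rfl
    · rw [Sym2.mem_iff] at hue
      rcases hue with h' | h'
      · exact absurd h' huy
      · exact absurd h' huv

lemma edge_at_v (hE : ∀ e ∈ E, ∀ w ∈ e, w ∈ V) (hv : v ∉ V) (hvx : v ≠ x) (huv : u ≠ v)
    {P e} (hP : P ⊆ E ∪ {s(x,u), s(u,v), s(y,v)}) (he : e ∈ P) (hve : v ∈ e) :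
    e = s(u, v) ∨ e = s(y, v) := by
  rcases hP he with h | h
  · exact absurd (hE _ h v hve) hv
  · simp only [Set.mem_insert_iff, Set.mem_singleton_iff] at h
    rcases h with rfl | rfl | rfl
    · rw [Sym2.mem_iff] at hve
      rcases hve with h' | h'
      · exact absurd h' hvx
      · exact absurd h'.symm huv
    · exact Or.inl rfl
    · exact Or.inr rfl

variable (hE : ∀ e ∈ E, ∀ w ∈ e, w ∈ V)
  (hx : x ∈ V) (hy : y ∈ V) (hu : u ∉ V) (hv : v ∉ V)
  (hxy : x ≠ y) (huv : u ≠ v) (hux : u ≠ x) (huy : u ≠ y) (hvx : v ≠ x) (hvy : v ≠ y)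

include hE hu hv huv huy hvx in
lemma n13_mem {P} (hP : MAp (V ∪ {u, v}) (E ∪ {s(x,u), s(u,v), s(y,v)}) P)
    (h2 : s(u,v) ∉ P) : s(x,u) ∈ P ∧ s(y,v) ∈ P := by
  obtain ⟨hPE, hcov⟩ := hP
  obtain ⟨e, ⟨heP, hue⟩, _⟩ := hcov u (by simp)
  rcases edge_at_u hE hu huy huv hPE heP hue with rfl | rfl
  · refine ⟨heP, ?_⟩
    obtain ⟨f, ⟨hfP, hvf⟩, _⟩ := hcov v (by simp)
    rcases hPE hfP with h | h
    · exact absurd (hE _ h v hvf) hv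
    · simp only [Set.mem_insert_iff, Set.mem_singleton_iff] at h
      rcases h with rfl | rfl | rfl
      · rw [Sym2.mem_iff] at hvf
        rcases hvf with h' | h'
        · exact absurd h' hvx
        · exact absurd h'.symm huv
      · exact absurd hfP h2
      · exact hfP
  · exact absurd heP h2

include hE hx hy hu hv hxy huv hux huy hvx hvy in
lemma fwdA_pf {P} (hP : MAp (V ∪ {u, v}) (E ∪ {s(x,u), s(u,v), s(y,v)}) P)
    (h2 : s(u,v) ∈ P) : MAp V E (P \ {s(u,v)}) := by
  obtain ⟨hPE, hcov⟩ := hP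
  have hu_un : ∀ e ∈ P, u ∈ e → e = s(u,v) :=
    fun e he hue => (hcov u (by simp)).unique ⟨he, hue⟩ ⟨h2, by simp⟩
  have hv_un : ∀ e ∈ P, v ∈ e → e = s(u,v) :=
    fun e he hve => (hcov v (by simp)).unique ⟨he, hve⟩ ⟨h2, by simp⟩
  constructor
  · rintro e ⟨heP, hne⟩
    simp only [Set.mem_singleton_iff] at hne
    rcases hPE heP with h | h
    · exact h
    · simp only [Set.mem_insert_iff, Set.mem_singleton_iff] at h
      rcases h with rfl | rfl | rfl
      · exact absurd (hu_un _ heP (by simp)) hne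
      · exact absurd rfl hne
      · exact absurd (hv_un _ heP (by simp)) hne
  · intro w hw
    obtain ⟨e, ⟨heP, hwe⟩, hun⟩ := hcov w (Or.inl hw)
    have hne : e ≠ s(u,v) := by
      intro hc
      rw [hc, Sym2.mem_iff] at hwe
      rcases hwe with rfl | rfl
      · exact hu hw
      · exact hv hw
    exact ⟨e, ⟨⟨heP, hne⟩, hwe⟩, fun f ⟨⟨hfP, _⟩, hwf⟩ => hun f ⟨hfP, hwf⟩⟩

include hE hx hy hu hv hxy huv hux huy hvx hvy in
lemma fwdC_pf {P} (hP : MAp (V ∪ {u, v}) (E ∪ {s(x,u), s(u,v), s(y,v)}) P)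
    (h2 : s(u,v) ∉ P) : MCp V E x y (P \ {s(x,u), s(y,v)}) := by
  obtain ⟨h1, h3⟩ := n13_mem hE hu hv huv huy hvx hP h2
  obtain ⟨hPE, hcov⟩ := hP
  have hx_un : ∀ e ∈ P, x ∈ e → e = s(x,u) :=
    fun e he hxe => (hcov x (Or.inl hx)).unique ⟨he, hxe⟩ ⟨h1, by simp⟩
  have hy_un : ∀ e ∈ P, y ∈ e → e = s(y,v) :=
    fun e he hye => (hcov y (Or.inl hy)).unique ⟨he, hye⟩ ⟨h3, by simp⟩
  refine ⟨?_, ?_, ?_⟩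
  · rintro e ⟨heP, hne⟩
    simp only [Set.mem_insert_iff, Set.mem_singleton_iff] at hne
    push_neg at hne
    rcases hPE heP with h | h
    · exact h
    · simp only [Set.mem_insert_iff, Set.mem_singleton_iff] at h
      rcases h with rfl | rfl | rfl
      · exact absurd rfl hne.1
      · exact absurd heP h2
      · exact absurd rfl hne.2
  · rintro w ⟨hwV, hwxy⟩
    simp only [Set.mem_insert_iff, Set.mem_singleton_iff] at hwxy
    push_neg at hwxy
    obtain ⟨e, ⟨heP, hwe⟩, hun⟩ := hcov w (Or.inl hwV)
    have hne1 : e ≠ s(x,u) := by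
      intro hc
      rw [hc, Sym2.mem_iff] at hwe
      rcases hwe with rfl | rfl
      · exact hwxy.1 rfl
      · exact hu hwV
    have hne3 : e ≠ s(y,v) := by
      intro hc
      rw [hc, Sym2.mem_iff] at hwe
      rcases hwe with rfl | rfl
      · exact hwxy.2 rfl
      · exact hv hwV
    refine ⟨e, ⟨⟨heP, by simp [hne1, hne3]⟩, hwe⟩, fun f ⟨⟨hfP, _⟩, hwf⟩ => hun f ⟨hfP, hwf⟩⟩
  · rintro e ⟨heP, hne⟩
    simp only [Set.mem_insert_iff, Set.mem_singleton_iff] at hne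
    push_neg at hne
    exact ⟨fun hxe => hne.1 (hx_un e heP hxe), fun hye => hne.2 (hy_un e heP hye)⟩

include hE hu hv in
lemma bwdA_pf {P} (hP : MAp V E P) :
    MAp (V ∪ {u, v}) (E ∪ {s(x,u), s(u,v), s(y,v)}) (P ∪ {s(u,v)}) := by
  obtain ⟨hPE, hcov⟩ := hP
  constructor
  · rintro e (heP | he)
    · exact Or.inl (hPE heP)
    · right
      simp only [Set.mem_singleton_iff] at he
      simp [he]
  · rintro w (hwV | hw)
    · obtain ⟨e, ⟨heP, hwe⟩, hun⟩ := hcov w hwV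
      refine ⟨e, ⟨Or.inl heP, hwe⟩, ?_⟩
      rintro f ⟨(hfP | hf), hwf⟩
      · exact hun f ⟨hfP, hwf⟩
      · simp only [Set.mem_singleton_iff] at hf
        rw [hf, Sym2.mem_iff] at hwf
        rcases hwf with rfl | rfl
        · exact absurd hwV hu
        · exact absurd hwV hv
    · have key : ∀ w', w' ∈ s(u,v) → (∃! e, (e ∈ P ∪ {s(u,v)}) ∧ w' ∈ e) := by
        intro w' hw'
        refine ⟨s(u,v), ⟨Or.inr rfl, hw'⟩, ?_⟩
        rintro f ⟨(hfP | hf), hwf⟩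
        · rw [Sym2.mem_iff] at hw'
          have := hE _ (hPE hfP) w' hwf
          rcases hw' with rfl | rfl
          · exact absurd this hu
          · exact absurd this hv
        · simpa using hf
      simp only [Set.mem_insert_iff, Set.mem_singleton_iff] at hw
      rcases hw with hw | hw
      · exact key w (by rw [Sym2.mem_iff]; exact Or.inl hw)
      · exact key w (by rw [Sym2.mem_iff]; exact Or.inr hw)

include hE hx hy hu hv hxy huv hux huy hvx hvy in
lemma bwdC_pf {P} (hP : MCp V E x y P) :
    MAp (V ∪ {u, v}) (E ∪ {s(x,u), s(u,v), s(y,v)}) (P ∪ {s(x,u), s(y,v)}) := by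
  obtain ⟨hPE, hcov, hnoxy⟩ := hP
  have hPend : ∀ e ∈ P, ∀ w ∈ e, w ∈ V := fun e he => hE e (hPE he)
  have keyx : ∃! e, (e ∈ P ∪ {s(x,u), s(y,v)}) ∧ x ∈ e := by
    refine ⟨s(x,u), ⟨Or.inr (by simp), by simp⟩, ?_⟩
    rintro f ⟨(hfP | hf), hwf⟩
    · exact absurd hwf (hnoxy f hfP).1
    · simp only [Set.mem_insert_iff, Set.mem_singleton_iff] at hf
      rcases hf with rfl | rfl
      · rfl
      · rw [Sym2.mem_iff] at hwf
        rcases hwf with h' | h'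
        · exact absurd h' hxy
        · exact absurd h'.symm hvx
  have keyy : ∃! e, (e ∈ P ∪ {s(x,u), s(y,v)}) ∧ y ∈ e := by
    refine ⟨s(y,v), ⟨Or.inr (by simp), by simp⟩, ?_⟩
    rintro f ⟨(hfP | hf), hwf⟩
    · exact absurd hwf (hnoxy f hfP).2
    · simp only [Set.mem_insert_iff, Set.mem_singleton_iff] at hf
      rcases hf with rfl | rfl
      · rw [Sym2.mem_iff] at hwf
        rcases hwf with h' | h'
        · exact absurd h'.symm hxy
        · exact absurd h'.symm huy
      · rfl
  have keyu : ∃! e, (e ∈ P ∪ {s(x,u), s(y,v)}) ∧ u ∈ e := by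
    refine ⟨s(x,u), ⟨Or.inr (by simp), by simp⟩, ?_⟩
    rintro f ⟨(hfP | hf), hwf⟩
    · exact absurd (hPend f hfP u hwf) hu
    · simp only [Set.mem_insert_iff, Set.mem_singleton_iff] at hf
      rcases hf with rfl | rfl
      · rfl
      · rw [Sym2.mem_iff] at hwf
        rcases hwf with h' | h'
        · exact absurd h' huy
        · exact absurd h' huv
  have keyv : ∃! e, (e ∈ P ∪ {s(x,u), s(y,v)}) ∧ v ∈ e := by
    refine ⟨s(y,v), ⟨Or.inr (by simp), by simp⟩, ?_⟩
    rintro f ⟨(hfP | hf), hwf⟩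
    · exact absurd (hPend f hfP v hwf) hv
    · simp only [Set.mem_insert_iff, Set.mem_singleton_iff] at hf
      rcases hf with rfl | rfl
      · rw [Sym2.mem_iff] at hwf
        rcases hwf with h' | h'
        · exact absurd h' hvx
        · exact absurd h'.symm huv
      · rfl
  constructor
  · rintro e (heP | he)
    · exact Or.inl (hPE heP)
    · simp only [Set.mem_insert_iff, Set.mem_singleton_iff] at he
      rcases he with rfl | rfl <;> simp
  · rintro w (hwV | hw)
    · by_cases hwx : x = w
      · rw [← hwx]; exact keyx
      · by_cases hwy : y = w
        · rw [← hwy]; exact keyy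
        · obtain ⟨e, ⟨heP, hwe⟩, hun⟩ := hcov w ⟨hwV, by
            simp only [Set.mem_insert_iff, Set.mem_singleton_iff]
            push_neg
            exact ⟨fun h => hwx h.symm, fun h => hwy h.symm⟩⟩
          refine ⟨e, ⟨Or.inl heP, hwe⟩, ?_⟩
          rintro f ⟨(hfP | hf), hwf⟩
          · exact hun f ⟨hfP, hwf⟩
          · simp only [Set.mem_insert_iff, Set.mem_singleton_iff] at hf
            rcases hf with rfl | rfl <;> rw [Sym2.mem_iff] at hwf
            · rcases hwf with rfl | rfl
              · exact absurd rfl hwx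
              · exact absurd hwV hu
            · rcases hwf with rfl | rfl
              · exact absurd rfl hwy
              · exact absurd hwV hv
    · simp only [Set.mem_insert_iff, Set.mem_singleton_iff] at hw
      rcases hw with hw | hw
      · rw [hw]; exact keyu
      · rw [hw]; exact keyv

include hE hx hy hu hv hxy huv hux huy hvx hvy in
noncomputable def equivA :
    {P : Set (Sym2 α) // MAp (V ∪ {u, v}) (E ∪ {s(x,u), s(u,v), s(y,v)}) P} ≃
      ({P : Set (Sym2 α) // MAp V E P} ⊕ {P : Set (Sym2 α) // MCp V E x y P}) := by
  classical
  have hn21 : s(u,v) ≠ s(x,u) := by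
    intro h
    rcases Sym2.eq_iff.mp h with ⟨h1, _⟩ | ⟨_, h2⟩
    · exact hux h1
    · exact hvx h2
  have hn23 : s(u,v) ≠ s(y,v) := by
    intro h
    rcases Sym2.eq_iff.mp h with ⟨h1, _⟩ | ⟨h1, _⟩
    · exact huy h1
    · exact huv h1
  refine
    { toFun := fun P => if h : s(u,v) ∈ P.1
        then Sum.inl ⟨P.1 \ {s(u,v)}, fwdA_pf hE hx hy hu hv hxy huv hux huy hvx hvy P.2 h⟩
        else Sum.inr ⟨P.1 \ {s(x,u), s(y,v)}, fwdC_pf hE hx hy hu hv hxy huv hux huy hvx hvy P.2 h⟩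
      invFun := Sum.elim
        (fun P => ⟨P.1 ∪ {s(u,v)}, bwdA_pf hE hu hv P.2⟩)
        (fun P => ⟨P.1 ∪ {s(x,u), s(y,v)}, bwdC_pf hE hx hy hu hv hxy huv hux huy hvx hvy P.2⟩)
      left_inv := ?_
      right_inv := ?_ }
  · rintro ⟨P, hP⟩
    by_cases h : s(u,v) ∈ P
    · dsimp only
      rw [dif_pos h]
      simp only [Sum.elim_inl]
      refine Subtype.ext ?_
      ext e
      simp only [Set.mem_union, Set.mem_diff, Set.mem_singleton_iff]
      constructor
      · rintro (⟨he, _⟩ | rfl)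
        · exact he
        · exact h
      · intro he
        by_cases he2 : e = s(u,v)
        · exact Or.inr he2
        · exact Or.inl ⟨he, he2⟩
    · dsimp only
      rw [dif_neg h]
      simp only [Sum.elim_inr]
      obtain ⟨h1, h3⟩ := n13_mem hE hu hv huv huy hvx hP h
      refine Subtype.ext ?_
      ext e
      simp only [Set.mem_union, Set.mem_diff, Set.mem_insert_iff, Set.mem_singleton_iff]
      constructor
      · rintro (⟨he, _⟩ | (rfl | rfl))
        · exact he
        · exact h1
        · exact h3
      · intro he
        by_cases he1 : e = s(x,u)
        · exact Or.inr (Or.inl he1)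
        · by_cases he3 : e = s(y,v)
          · exact Or.inr (Or.inr he3)
          · exact Or.inl ⟨he, by tauto⟩
  · rintro (⟨P, hP⟩ | ⟨P, hP⟩)
    · have hmem : s(u,v) ∈ P ∪ {s(u,v)} := Or.inr rfl
      have hnot : s(u,v) ∉ P := fun hc => (n2_notin_E hE hu) (hP.1 hc)
      dsimp only [Sum.elim_inl]
      rw [dif_pos hmem]
      refine congrArg Sum.inl (Subtype.ext ?_)
      ext e
      simp only [Set.mem_diff, Set.mem_union, Set.mem_singleton_iff]
      constructor
      · rintro ⟨(he | rfl), hne⟩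
        · exact he
        · exact absurd rfl hne
      · intro he
        exact ⟨Or.inl he, fun hc => hnot (hc ▸ he)⟩
    · have hnot2 : s(u,v) ∉ P ∪ {s(x,u), s(y,v)} := by
        rintro (hc | hc)
        · exact (n2_notin_E hE hu) (hP.1 hc)
        · simp only [Set.mem_insert_iff, Set.mem_singleton_iff] at hc
          rcases hc with hc | hc
          · exact hn21 hc
          · exact hn23 hc
      have hnot1 : s(x,u) ∉ P := fun hc => (n1_notin_E hE hu) (hP.1 hc)
      have hnot3 : s(y,v) ∉ P := fun hc => (n3_notin_E hE hv) (hP.1 hc)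
      dsimp only [Sum.elim_inr]
      rw [dif_neg hnot2]
      refine congrArg Sum.inr (Subtype.ext ?_)
      ext e
      simp only [Set.mem_diff, Set.mem_union, Set.mem_insert_iff, Set.mem_singleton_iff]
      constructor
      · rintro ⟨(he | (rfl | rfl)), hne⟩
        · exact he
        · exact absurd (Or.inl rfl) hne
        · exact absurd (Or.inr rfl) hne
      · intro he
        refine ⟨Or.inl he, ?_⟩
        rintro (rfl | rfl)
        · exact hnot1 he
        · exact hnot3 he

include hE hu hv hux huy hvx hvy huv in
lemma straight_iff (P : Set (Sym2 α)) :
    MCp (V ∪ {u, v}) (E ∪ {s(x,u), s(u,v), s(y,v)}) u v P ↔ MAp V E P := by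
  constructor
  · rintro ⟨hPE, hcov, hno⟩
    constructor
    · intro e heP
      rcases hPE heP with h | h
      · exact h
      · simp only [Set.mem_insert_iff, Set.mem_singleton_iff] at h
        rcases h with rfl | rfl | rfl
        · exact absurd (by simp : u ∈ s(x,u)) (hno _ heP).1
        · exact absurd (by simp : u ∈ s(u,v)) (hno _ heP).1
        · exact absurd (by simp : v ∈ s(y,v)) (hno _ heP).2
    · intro w hwV
      refine hcov w ⟨Or.inl hwV, ?_⟩
      simp only [Set.mem_insert_iff, Set.mem_singleton_iff]
      push_neg
      exact ⟨fun h => hu (h ▸ hwV), fun h => hv (h ▸ hwV)⟩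
  · rintro ⟨hPE, hcov⟩
    have hPend : ∀ e ∈ P, ∀ w ∈ e, w ∈ V := fun e he => hE e (hPE he)
    refine ⟨fun e he => Or.inl (hPE he), ?_, ?_⟩
    · rintro w ⟨hwV | hw, hne⟩
      · exact hcov w hwV
      · exact absurd hw (by simpa using hne)
    · intro e heP
      exact ⟨fun hc => hu (hPend e heP u hc), fun hc => hv (hPend e heP v hc)⟩

include hE hx hy hu hv hxy huv hux huy hvx hvy in
lemma turn_fwd {P : Set (Sym2 α)}
    (hP : MCp (V ∪ {u, v}) (E ∪ {s(x,u), s(u,v), s(y,v)}) y v P) :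
    MCp V E x y (P \ {s(x,u)}) := by
  obtain ⟨hPE, hcov, hno⟩ := hP
  have hn2 : s(u,v) ∉ P := fun hc => (hno _ hc).2 (by simp)
  have hn3 : s(y,v) ∉ P := fun hc => (hno _ hc).2 (by simp)
  -- u is covered, so s(x,u) ∈ P
  have hu_mem : u ∈ (V ∪ {u, v}) \ {y, v} := by
    refine ⟨by simp, ?_⟩
    simp only [Set.mem_insert_iff, Set.mem_singleton_iff]
    push_neg
    exact ⟨huy, huv⟩
  obtain ⟨e, ⟨heP, hue⟩, _⟩ := hcov u hu_mem
  have h1 : s(x,u) ∈ P := by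
    rcases edge_at_u hE hu huy huv hPE heP hue with rfl | rfl
    · exact heP
    · exact absurd heP hn2
  have hx_mem : x ∈ (V ∪ {u, v}) \ {y, v} := by
    refine ⟨Or.inl hx, ?_⟩
    simp only [Set.mem_insert_iff, Set.mem_singleton_iff]
    push_neg
    exact ⟨hxy, Ne.symm hvx⟩
  have hx_un : ∀ e ∈ P, x ∈ e → e = s(x,u) :=
    fun e he hxe => (hcov x hx_mem).unique ⟨he, hxe⟩ ⟨h1, by simp⟩
  refine ⟨?_, ?_, ?_⟩
  · rintro e ⟨heP, hne⟩
    simp only [Set.mem_singleton_iff] at hne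
    rcases hPE heP with h | h
    · exact h
    · simp only [Set.mem_insert_iff, Set.mem_singleton_iff] at h
      rcases h with rfl | rfl | rfl
      · exact absurd rfl hne
      · exact absurd heP hn2
      · exact absurd heP hn3
  · rintro w ⟨hwV, hwxy⟩
    simp only [Set.mem_insert_iff, Set.mem_singleton_iff] at hwxy
    push_neg at hwxy
    have hw_mem : w ∈ (V ∪ {u, v}) \ {y, v} := by
      refine ⟨Or.inl hwV, ?_⟩
      simp only [Set.mem_insert_iff, Set.mem_singleton_iff]
      push_neg
      exact ⟨hwxy.2, fun h => hv (h ▸ hwV)⟩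
    obtain ⟨e, ⟨heP, hwe⟩, hun⟩ := hcov w hw_mem
    have hne1 : e ≠ s(x,u) := by
      intro hc
      rw [hc, Sym2.mem_iff] at hwe
      rcases hwe with rfl | rfl
      · exact hwxy.1 rfl
      · exact hu hwV
    exact ⟨e, ⟨⟨heP, hne1⟩, hwe⟩, fun f ⟨⟨hfP, _⟩, hwf⟩ => hun f ⟨hfP, hwf⟩⟩
  · rintro e ⟨heP, hne⟩
    simp only [Set.mem_singleton_iff] at hne
    exact ⟨fun hc => hne (hx_un e heP hc), (hno e heP).1⟩

include hE hx hy hu hv hxy huv hux huy hvx hvy in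
lemma turn_bwd {P : Set (Sym2 α)} (hP : MCp V E x y P) :
    MCp (V ∪ {u, v}) (E ∪ {s(x,u), s(u,v), s(y,v)}) y v (P ∪ {s(x,u)}) := by
  obtain ⟨hPE, hcov, hnoxy⟩ := hP
  have hPend : ∀ e ∈ P, ∀ w ∈ e, w ∈ V := fun e he => hE e (hPE he)
  have keyx : ∃! e, (e ∈ P ∪ {s(x,u)}) ∧ x ∈ e := by
    refine ⟨s(x,u), ⟨Or.inr rfl, by simp⟩, ?_⟩
    rintro f ⟨(hfP | hf), hwf⟩
    · exact absurd hwf (hnoxy f hfP).1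
    · simpa using hf
  have keyu : ∃! e, (e ∈ P ∪ {s(x,u)}) ∧ u ∈ e := by
    refine ⟨s(x,u), ⟨Or.inr rfl, by simp⟩, ?_⟩
    rintro f ⟨(hfP | hf), hwf⟩
    · exact absurd (hPend f hfP u hwf) hu
    · simpa using hf
  refine ⟨?_, ?_, ?_⟩
  · rintro e (heP | he)
    · exact Or.inl (hPE heP)
    · simp only [Set.mem_singleton_iff] at he
      rw [he]
      right; simp
  · rintro w ⟨hwV' , hwyv⟩
    simp only [Set.mem_insert_iff, Set.mem_singleton_iff] at hwyv
    push_neg at hwyv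
    rcases hwV' with hwV | hw
    · by_cases hwx : x = w
      · rw [← hwx]; exact keyx
      · obtain ⟨e, ⟨heP, hwe⟩, hun⟩ := hcov w ⟨hwV, by
          simp only [Set.mem_insert_iff, Set.mem_singleton_iff]
          push_neg
          exact ⟨fun h => hwx h.symm, hwyv.1⟩⟩
        refine ⟨e, ⟨Or.inl heP, hwe⟩, ?_⟩
        rintro f ⟨(hfP | hf), hwf⟩
        · exact hun f ⟨hfP, hwf⟩
        · simp only [Set.mem_singleton_iff] at hf
          rw [hf, Sym2.mem_iff] at hwf
          rcases hwf with rfl | rfl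
          · exact absurd rfl hwx
          · exact absurd hwV hu
    · simp only [Set.mem_insert_iff, Set.mem_singleton_iff] at hw
      rcases hw with hw | hw
      · rw [hw]; exact keyu
      · exact absurd hw hwyv.2
  · rintro e (heP | he)
    · exact ⟨(hnoxy e heP).2, fun hc => hv (hPend e heP v hc)⟩
    · simp only [Set.mem_singleton_iff] at he
      rw [he]
      constructor
      · rw [Sym2.mem_iff]
        push_neg
        exact ⟨Ne.symm hxy, Ne.symm huy⟩
      · rw [Sym2.mem_iff]
        push_neg
        exact ⟨hvx, Ne.symm huv⟩

include hE hx hy hu hv hxy huv hux huy hvx hvy in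
noncomputable def equivTurn :
    {P : Set (Sym2 α) // MCp (V ∪ {u, v}) (E ∪ {s(x,u), s(u,v), s(y,v)}) y v P} ≃
      {P : Set (Sym2 α) // MCp V E x y P} := by
  classical
  refine
    { toFun := fun P => ⟨P.1 \ {s(x,u)}, turn_fwd hE hx hy hu hv hxy huv hux huy hvx hvy P.2⟩
      invFun := fun P => ⟨P.1 ∪ {s(x,u)}, turn_bwd hE hx hy hu hv hxy huv hux huy hvx hvy P.2⟩
      left_inv := ?_
      right_inv := ?_ }
  · rintro ⟨P, hP⟩
    -- need s(x,u) ∈ P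
    obtain ⟨hPE, hcov, hno⟩ := hP
    have hu_mem : u ∈ (V ∪ {u, v}) \ {y, v} := by
      refine ⟨by simp, ?_⟩
      simp only [Set.mem_insert_iff, Set.mem_singleton_iff]
      push_neg
      exact ⟨huy, huv⟩
    obtain ⟨e, ⟨heP, hue⟩, _⟩ := hcov u hu_mem
    have h1 : s(x,u) ∈ P := by
      rcases edge_at_u hE hu huy huv hPE heP hue with rfl | rfl
      · exact heP
      · exact absurd (by simp : v ∈ s(u,v)) (hno _ heP).2
    refine Subtype.ext ?_
    ext e
    simp only [Set.mem_union, Set.mem_diff, Set.mem_singleton_iff]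
    constructor
    · rintro (⟨he, _⟩ | rfl)
      · exact he
      · exact h1
    · intro he
      by_cases h' : e = s(x,u)
      · exact Or.inr h'
      · exact Or.inl ⟨he, h'⟩
  · rintro ⟨P, hP⟩
    have hnot : s(x,u) ∉ P := fun hc => (n1_notin_E hE hu) (hP.1 hc)
    refine Subtype.ext ?_
    ext e
    simp only [Set.mem_diff, Set.mem_union, Set.mem_singleton_iff]
    constructor
    · rintro ⟨(he | rfl), hne⟩
      · exact he
      · exact absurd rfl hne
    · intro he
      exact ⟨Or.inl he, fun hc => hnot (hc ▸ he)⟩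

end Abstract

-- ### finiteness
lemma tileSides_finite (q : ℤ × ℤ) : (tileSides q).Finite :=
  (Set.finite_singleton _).insert _ |>.insert _ |>.insert _

lemma pEdges_finite (a : List ℕ) (m : ℕ) : (pEdges a m).Finite := by
  apply Set.Finite.subset
    ((Finset.Icc 1 m).finite_toSet.biUnion (fun k _ => tileSides_finite (snakePos a k)))
  rintro e ⟨k, hk, h⟩
  exact Set.mem_biUnion (Finset.mem_coe.mpr hk) h

lemma finMA (a : List ℕ) (m : ℕ) : Finite {P // MAp (pVerts a m) (pEdges a m) P} := by
  haveI := ((pEdges_finite a m).finite_subsets).to_subtype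
  apply Finite.of_injective
    (fun P => (⟨P.1, P.2.1⟩ : {t | t ⊆ pEdges a m}))
  intro P Q h
  simpa [Subtype.ext_iff] using h

lemma finMC (a : List ℕ) (m : ℕ) (x y : ℤ × ℤ) :
    Finite {P // MCp (pVerts a m) (pEdges a m) x y P} := by
  haveI := ((pEdges_finite a m).finite_subsets).to_subtype
  apply Finite.of_injective
    (fun P => (⟨P.1, P.2.1⟩ : {t | t ⊆ pEdges a m}))
  intro P Q h
  simpa [Subtype.ext_iff] using h

-- ### the two counters
noncomputable def NA (a : List ℕ) (m : ℕ) : ℕ :=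
  Nat.card {P : Set (Sym2 (ℤ × ℤ)) // MAp (pVerts a m) (pEdges a m) P}

noncomputable def NC (a : List ℕ) (m : ℕ) : ℕ :=
  Nat.card {P : Set (Sym2 (ℤ × ℤ)) //
    MCp (pVerts a m) (pEdges a m) (snakePos a (m+1)) (snakePos a m + ((1:ℤ),(1:ℤ))) P}

-- ### recurrences
lemma NA_succ (a : List ℕ) (m : ℕ) (hm : 1 ≤ m) : NA a (m+1) = NA a m + NC a m := by
  unfold NA NC
  rw [pVerts_split a m hm, pEdges_split a m hm]
  rw [Nat.card_congr (equivA (pEdges_endpoints a m) (X_mem a m hm) (Y_mem a m hm)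
    (U_not_mem a m hm) (V_not_mem a m hm) (X_ne_Y a m hm) (U_ne_V a m) (U_ne_X a m)
    (U_ne_Y a m hm) (V_ne_X a m) (V_ne_Y a m hm))]
  haveI := finMA a m
  haveI := finMC a m (snakePos a (m+1)) (snakePos a m + ((1:ℤ),(1:ℤ)))
  exact Nat.card_sum

lemma NC_succ_straight (a : List ℕ) (m : ℕ) (hm : 1 ≤ m) (h : isTurnPoint a (m+1) = true) :
    NC a (m+1) = NA a m := by
  unfold NA NC
  rw [snakePos_straight a m hm h, pVerts_split a m hm, pEdges_split a m hm]
  exact Nat.card_congr (Equiv.subtypeEquivRight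
    (straight_iff (pEdges_endpoints a m) (U_not_mem a m hm) (V_not_mem a m hm)
      (U_ne_V a m) (U_ne_X a m) (U_ne_Y a m hm) (V_ne_X a m) (V_ne_Y a m hm)))

lemma NC_succ_turn (a : List ℕ) (m : ℕ) (hm : 1 ≤ m) (h : isTurnPoint a (m+1) = false) :
    NC a (m+1) = NC a m := by
  unfold NC
  rw [snakePos_turn a m hm h, pVerts_split a m hm, pEdges_split a m hm]
  exact Nat.card_congr (equivTurn (pEdges_endpoints a m) (X_mem a m hm) (Y_mem a m hm)
    (U_not_mem a m hm) (V_not_mem a m hm) (X_ne_Y a m hm) (U_ne_V a m) (U_ne_X a m)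
    (U_ne_Y a m hm) (V_ne_X a m) (V_ne_Y a m hm))

-- ### base case
lemma zero_add_pt (ε : ℤ × ℤ) : ((0:ℤ),(0:ℤ)) + ε = ε := by cases ε; simp

lemma pVerts_one (a : List ℕ) : pVerts a 1 = corners := by
  ext w
  constructor
  · rintro ⟨k, hk, ε, hε, rfl⟩
    simp only [Finset.mem_Icc] at hk
    have : k = 1 := by omega
    subst this
    show snakePos a 1 + ε ∈ corners
    rw [show snakePos a 1 = ((0:ℤ),(0:ℤ)) from rfl, zero_add_pt]
    exact hε
  · intro hw
    exact ⟨1, by simp, w, hw, by rw [show snakePos a 1 = ((0:ℤ),(0:ℤ)) from rfl, zero_add_pt]⟩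

lemma pEdges_one (a : List ℕ) : pEdges a 1 = tileSides ((0:ℤ),(0:ℤ)) := by
  ext e
  constructor
  · rintro ⟨k, hk, h⟩
    simp only [Finset.mem_Icc] at hk
    have : k = 1 := by omega
    subst this
    exact h
  · intro h
    exact ⟨1, by simp, h⟩

-- the four points and edges of the unit tile
private def O : ℤ × ℤ := ((0:ℤ),(0:ℤ))
private def R : ℤ × ℤ := ((1:ℤ),(0:ℤ))
private def T : ℤ × ℤ := ((0:ℤ),(1:ℤ))
private def W : ℤ × ℤ := ((1:ℤ),(1:ℤ))

lemma tileSides_O : tileSides O = {s(O,R), s(O,T), s(R,W), s(T,W)} := by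
  have h1 : O + ((1:ℤ),(0:ℤ)) = R := by decide
  have h2 : O + ((0:ℤ),(1:ℤ)) = T := by decide
  have h3 : O + ((1:ℤ),(1:ℤ)) = W := by decide
  unfold tileSides
  rw [h1, h2, h3]

lemma corners_eq : corners = {O, R, T, W} := rfl

lemma M1_pf : MAp corners (tileSides O) {s(O,R), s(T,W)} := by
  rw [tileSides_O, corners_eq]
  constructor
  · intro e he
    simp only [Set.mem_insert_iff, Set.mem_singleton_iff] at he ⊢
    tauto
  · intro w hw
    simp only [Set.mem_insert_iff, Set.mem_singleton_iff] at hw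
    rcases hw with rfl | rfl | rfl | rfl
    · refine ⟨s(O,R), ⟨by simp, by decide⟩, ?_⟩
      rintro f ⟨hf, hwf⟩
      simp only [Set.mem_insert_iff, Set.mem_singleton_iff] at hf
      rcases hf with rfl | rfl
      · rfl
      · exact absurd hwf (by decide)
    · refine ⟨s(O,R), ⟨by simp, by decide⟩, ?_⟩
      rintro f ⟨hf, hwf⟩
      simp only [Set.mem_insert_iff, Set.mem_singleton_iff] at hf
      rcases hf with rfl | rfl
      · rfl
      · exact absurd hwf (by decide)
    · refine ⟨s(T,W), ⟨by simp, by decide⟩, ?_⟩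
      rintro f ⟨hf, hwf⟩
      simp only [Set.mem_insert_iff, Set.mem_singleton_iff] at hf
      rcases hf with rfl | rfl
      · exact absurd hwf (by decide)
      · rfl
    · refine ⟨s(T,W), ⟨by simp, by decide⟩, ?_⟩
      rintro f ⟨hf, hwf⟩
      simp only [Set.mem_insert_iff, Set.mem_singleton_iff] at hf
      rcases hf with rfl | rfl
      · exact absurd hwf (by decide)
      · rfl

lemma M2_pf : MAp corners (tileSides O) {s(O,T), s(R,W)} := by
  rw [tileSides_O, corners_eq]
  constructor
  · intro e he
    simp only [Set.mem_insert_iff, Set.mem_singleton_iff] at he ⊢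
    tauto
  · intro w hw
    simp only [Set.mem_insert_iff, Set.mem_singleton_iff] at hw
    rcases hw with rfl | rfl | rfl | rfl
    · refine ⟨s(O,T), ⟨by simp, by decide⟩, ?_⟩
      rintro f ⟨hf, hwf⟩
      simp only [Set.mem_insert_iff, Set.mem_singleton_iff] at hf
      rcases hf with rfl | rfl
      · rfl
      · exact absurd hwf (by decide)
    · refine ⟨s(R,W), ⟨by simp, by decide⟩, ?_⟩
      rintro f ⟨hf, hwf⟩
      simp only [Set.mem_insert_iff, Set.mem_singleton_iff] at hf
      rcases hf with rfl | rfl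
      · exact absurd hwf (by decide)
      · rfl
    · refine ⟨s(O,T), ⟨by simp, by decide⟩, ?_⟩
      rintro f ⟨hf, hwf⟩
      simp only [Set.mem_insert_iff, Set.mem_singleton_iff] at hf
      rcases hf with rfl | rfl
      · rfl
      · exact absurd hwf (by decide)
    · refine ⟨s(R,W), ⟨by simp, by decide⟩, ?_⟩
      rintro f ⟨hf, hwf⟩
      simp only [Set.mem_insert_iff, Set.mem_singleton_iff] at hf
      rcases hf with rfl | rfl
      · exact absurd hwf (by decide)
      · rfl

lemma one_tile_classify (P : Set (Sym2 (ℤ × ℤ))) (hP : MAp corners (tileSides O) P) :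
    P = {s(O,R), s(T,W)} ∨ P = {s(O,T), s(R,W)} := by
  rw [tileSides_O, corners_eq] at hP
  obtain ⟨hPE, hcov⟩ := hP
  have hmem : ∀ e ∈ P, e = s(O,R) ∨ e = s(O,T) ∨ e = s(R,W) ∨ e = s(T,W) := by
    intro e he
    have := hPE he
    simp only [Set.mem_insert_iff, Set.mem_singleton_iff] at this
    tauto
  by_cases h1 : s(O,R) ∈ P
  · left
    have hv1 : s(O,T) ∉ P := fun hc =>
      (by decide : s(O,T) ≠ s(O,R)) ((hcov O (by simp)).unique ⟨hc, by decide⟩ ⟨h1, by decide⟩)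
    have hv2 : s(R,W) ∉ P := fun hc =>
      (by decide : s(R,W) ≠ s(O,R)) ((hcov R (by simp)).unique ⟨hc, by decide⟩ ⟨h1, by decide⟩)
    have h2 : s(T,W) ∈ P := by
      obtain ⟨e, ⟨heP, hTe⟩, _⟩ := hcov T (by simp)
      rcases hmem e heP with rfl | rfl | rfl | rfl
      · exact absurd hTe (by decide)
      · exact absurd heP hv1
      · exact absurd hTe (by decide)
      · exact heP
    ext e
    simp only [Set.mem_insert_iff, Set.mem_singleton_iff]
    constructor
    · intro he
      rcases hmem e he with rfl | rfl | rfl | rfl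
      · tauto
      · exact absurd he hv1
      · exact absurd he hv2
      · tauto
    · rintro (rfl | rfl)
      · exact h1
      · exact h2
  · right
    have hv1 : s(O,T) ∈ P := by
      obtain ⟨e, ⟨heP, hOe⟩, _⟩ := hcov O (by simp)
      rcases hmem e heP with rfl | rfl | rfl | rfl
      · exact absurd heP h1
      · exact heP
      · exact absurd hOe (by decide)
      · exact absurd hOe (by decide)
    have hv3 : s(T,W) ∉ P := fun hc =>
      (by decide : s(T,W) ≠ s(O,T)) ((hcov T (by simp)).unique ⟨hc, by decide⟩ ⟨hv1, by decide⟩)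
    have hv2 : s(R,W) ∈ P := by
      obtain ⟨e, ⟨heP, hRe⟩, _⟩ := hcov R (by simp)
      rcases hmem e heP with rfl | rfl | rfl | rfl
      · exact absurd heP h1
      · exact absurd hRe (by decide)
      · exact heP
      · exact absurd hRe (by decide)
    ext e
    simp only [Set.mem_insert_iff, Set.mem_singleton_iff]
    constructor
    · intro he
      rcases hmem e he with rfl | rfl | rfl | rfl
      · exact absurd he h1
      · tauto
      · tauto
      · exact absurd he hv3
    · rintro (rfl | rfl)
      · exact hv1
      · exact hv2

lemma NA_one (a : List ℕ) : NA a 1 = 2 := by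
  unfold NA
  rw [pVerts_one, pEdges_one]
  rw [Nat.card_congr (Equiv.subtypeEquivRight (q := fun P =>
    P ∈ ({ {s(O,R), s(T,W)}, {s(O,T), s(R,W)} } : Set (Set (Sym2 (ℤ × ℤ)))) )
    (fun P => by
      constructor
      · intro h
        simpa using one_tile_classify P h
      · intro h
        simp only [Set.mem_insert_iff, Set.mem_singleton_iff] at h
        rcases h with rfl | rfl
        · exact M1_pf
        · exact M2_pf))]
  rw [Nat.card_coe_set_eq]
  apply Set.ncard_pair
  intro hc
  have : s(O,R) ∈ ({s(O,T), s(R,W)} : Set (Sym2 (ℤ × ℤ))) := by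
    rw [← hc]; simp
  simp only [Set.mem_insert_iff, Set.mem_singleton_iff] at this
  rcases this with h | h <;> exact (by decide : ¬ _) h

lemma one_tile_C_classify (P : Set (Sym2 (ℤ × ℤ)))
    (hP : MCp corners (tileSides O) R W P) : P = {s(O,T)} := by
  rw [tileSides_O, corners_eq] at hP
  obtain ⟨hPE, hcov, hno⟩ := hP
  have hmem : ∀ e ∈ P, e = s(O,T) := by
    intro e he
    have h4 := hPE he
    simp only [Set.mem_insert_iff, Set.mem_singleton_iff] at h4
    rcases h4 with rfl | rfl | rfl | rfl
    · exact absurd (by decide : R ∈ s(O,R)) (hno _ he).1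
    · rfl
    · exact absurd (by decide : R ∈ s(R,W)) (hno _ he).1
    · exact absurd (by decide : W ∈ s(T,W)) (hno _ he).2
  have hO : O ∈ ({O, R, T, W} : Set (ℤ × ℤ)) \ {R, W} := by
    constructor
    · simp
    · simp only [Set.mem_insert_iff, Set.mem_singleton_iff]
      push_neg
      constructor <;> decide
  obtain ⟨e, ⟨heP, hOe⟩, _⟩ := hcov O hO
  have := hmem e heP
  subst this
  ext f
  simp only [Set.mem_singleton_iff]
  exact ⟨fun hf => hmem f hf, fun hf => hf ▸ heP⟩

lemma C1_pf : MCp corners (tileSides O) R W {s(O,T)} := by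
  rw [tileSides_O, corners_eq]
  refine ⟨?_, ?_, ?_⟩
  · intro e he
    simp only [Set.mem_singleton_iff] at he
    simp [he]
  · rintro w ⟨hw, hwRW⟩
    simp only [Set.mem_insert_iff, Set.mem_singleton_iff] at hw hwRW
    push_neg at hwRW
    rcases hw with rfl | rfl | rfl | rfl
    · refine ⟨s(O,T), ⟨rfl, by decide⟩, ?_⟩
      rintro f ⟨hf, _⟩
      simpa using hf
    · exact absurd rfl hwRW.1
    · refine ⟨s(O,T), ⟨rfl, by decide⟩, ?_⟩
      rintro f ⟨hf, _⟩
      simpa using hf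
    · exact absurd rfl hwRW.2
  · intro e he
    simp only [Set.mem_singleton_iff] at he
    subst he
    constructor <;> decide

lemma NC_one (a : List ℕ) : NC a 1 = 1 := by
  unfold NC
  have hpos2 : snakePos a (1+1) = R := by
    rw [snakePos_succ a 1 le_rfl]
    show ((0:ℤ),(0:ℤ)) + ((1:ℤ),(0:ℤ)) = R
    decide
  have hY : snakePos a 1 + ((1:ℤ),(1:ℤ)) = W := by
    show ((0:ℤ),(0:ℤ)) + ((1:ℤ),(1:ℤ)) = W
    decide
  rw [pVerts_one, pEdges_one, hpos2, hY]
  rw [Nat.card_congr (Equiv.subtypeEquivRight (q := fun P =>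
    P ∈ ({ {s(O,T)} } : Set (Set (Sym2 (ℤ × ℤ)))) )
    (fun P => by
      constructor
      · intro h
        simpa using one_tile_C_classify P h
      · intro h
        simp only [Set.mem_singleton_iff] at h
        rw [h]
        exact C1_pf))]
  rw [Nat.card_coe_set_eq]
  exact Set.ncard_singleton _


-- ### assembly

lemma main_count (a : List ℕ) : ∀ m, 1 ≤ m →
    NA a m = (fAC (isTurnPoint a) m).1 ∧ NC a m = (fAC (isTurnPoint a) m).2 := by
  intro m
  induction m with
  | zero => omega
  | succ n ih =>
      intro _
      rcases Nat.eq_zero_or_pos n with rfl | hn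
      · constructor
        · rw [NA_one]; rfl
        · rw [NC_one]
          show 1 = if isTurnPoint a 1 then (fAC (isTurnPoint a) 0).1 else (fAC (isTurnPoint a) 0).2
          rcases Bool.eq_false_or_eq_true (isTurnPoint a 1) with h | h <;> rw [h] <;> rfl
      · obtain ⟨hNA, hNC⟩ := ih hn
        constructor
        · rw [NA_succ a n hn, hNA, hNC]; rfl
        · show NC a (n+1) = if isTurnPoint a (n+1) then (fAC (isTurnPoint a) n).1
            else (fAC (isTurnPoint a) n).2
          rcases Bool.eq_false_or_eq_true (isTurnPoint a (n+1)) with h | h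
          · rw [h, if_pos rfl, NC_succ_straight a n hn h, hNA]
          · rw [h, if_neg (by simp), NC_succ_turn a n hn h, hNC]

theorem matchNum_snake_eq_continuant (a : List ℕ) (ha : a ≠ []) (hpos : ∀ x ∈ a, 0 < x) :
    matchNum a = continuant a := by
  by_cases h1 : a.sum = 1
  · -- then a = [1]
    have ha1 : a = [1] := by
      obtain ⟨b, t, rfl⟩ := List.exists_cons_of_ne_nil ha
      have hb := hpos b (by simp)
      simp only [List.sum_cons] at h1
      have htsum : t.sum = 0 := by omega
      have hb1 : b = 1 := by omega
      have ht : t = [] := by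
        cases t with
        | nil => rfl
        | cons c t' =>
            have := hpos c (by simp)
            simp only [List.sum_cons] at htsum
            omega
      rw [hb1, ht]
    subst ha1
    have hcard : matchNum [1] = 1 := by
      unfold matchNum
      have hiff : ∀ P, IsSnakePerfectMatching [1] P ↔
          P ∈ ({ {s(O,R)} } : Set (Set (Sym2 (ℤ × ℤ)))) := by
        intro P
        unfold IsSnakePerfectMatching snakeVerts snakeEdges
        rw [if_pos (by simp), if_pos (by simp)]
        constructor
        · rintro ⟨hPE, hcov⟩
          obtain ⟨e, ⟨heP, hOe⟩, _⟩ := hcov O (by simp [O])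
          have he : e = s(O,R) := by simpa [O, R] using hPE heP
          subst he
          simp only [Set.mem_singleton_iff]
          ext f
          simp only [Set.mem_singleton_iff]
          exact ⟨fun hf => by simpa [O, R] using hPE hf, fun hf => hf ▸ heP⟩
        · intro h
          simp only [Set.mem_singleton_iff] at h
          subst h
          refine ⟨fun e he => by simpa [O, R] using he, ?_⟩
          rintro w hw
          simp only [Set.mem_insert_iff, Set.mem_singleton_iff] at hw
          have key : w ∈ s(O,R) := by
            rcases hw with rfl | rfl
            · decide
            · decide
          exact ⟨s(O,R), ⟨rfl, key⟩, fun f ⟨hf, _⟩ => by simpa using hf⟩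
      rw [Nat.card_congr (Equiv.subtypeEquivRight hiff), Nat.card_coe_set_eq]
      exact Set.ncard_singleton _
    rw [hcard]
    rfl
  · have hsum : 2 ≤ a.sum := by
      obtain ⟨b, t, rfl⟩ := List.exists_cons_of_ne_nil ha
      have hb := hpos b (by simp)
      simp only [List.sum_cons] at h1 ⊢
      omega
    have hd : 1 ≤ a.sum - 1 := by omega
    have hmatch : matchNum a = NA a (a.sum - 1) := by
      unfold matchNum NA
      apply Nat.card_congr (Equiv.subtypeEquivRight _)
      intro P
      have hv : snakeVerts a = pVerts a (a.sum - 1) := by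
        unfold snakeVerts pVerts
        rw [if_neg h1]
      have he : snakeEdges a = pEdges a (a.sum - 1) := by
        unfold snakeEdges pEdges
        rw [if_neg h1]
      unfold IsSnakePerfectMatching MAp
      rw [hv, he]
    rw [hmatch, (main_count a (a.sum - 1) hd).1, fAC_main a ha hpos]
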